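/- arXiv:1411.7801 — 2 statements merged into one kernel-verified Lean document; each statement's English description precedes it below -/
import Mathlib

section
/- Assume a breakdown-free Arnoldi decomposition of length j (j ≥ 2). Then: (i) the vector y_{s_j}^{(G)} ∈ ℂ^j defined by x_j^{(G)} = x_{j−1}^{(G)} + V_j y_{s_j}^{(G)} is the unique minimizer over y ∈ ℂ^j of ‖[β e₁^{[j]} − H̄_{j−1} y_{j−1}^{(G)}; 0] − H̄_j y‖₂ (the bracketed vector lies in ℂ^{j+1}, β e₁^{[j]} ∈ ℂ^j); (ii) the vector ỹ_{s_j}^{(F)} := H_j†(β e₁^{[j]} − H̄_{j−1} y_{j−1}^{(G)}) is a minimizer over y ∈ ℂ^j of ‖β e₁^{[j]} − H̄_{j−1} y_{j−1}^{(G)} − H_j y‖₂, and among all such minimizers it has smallest 2-norm. -/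
open Matrix

noncomputable section

set_option maxHeartbeats 1000000

/-- Squared Euclidean norm of a complex vector. -/
def vnSq {m : Type*} [Fintype m] (v : m → ℂ) : ℝ := ∑ i, Complex.normSq (v i)

/-- Euclidean (2-)norm of a complex vector. -/
def vnorm {m : Type*} [Fintype m] (v : m → ℂ) : ℝ := Real.sqrt (vnSq v)

/-- The four Moore–Penrose conditions: `P` is the Moore-Penrose pseudoinverse of `M`. -/
def IsMoorePenrose {a b : Type*} [Fintype a] [Fintype b]
    (M : Matrix a b ℂ) (P : Matrix b a ℂ) : Prop :=
  M * P * M = M ∧ P * M * P = P ∧ (M * P)ᴴ = M * P ∧ (P * M)ᴴ = P * M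

/-- The Krylov subspace `K_i(A, r) = span {r, A r, …, A^(i-1) r}`. -/
def krylov {n : ℕ} (A : Matrix (Fin n) (Fin n) ℂ) (r : Fin n → ℂ) (i : ℕ) :
    Submodule ℂ (Fin n → ℂ) :=
  Submodule.span ℂ { v | ∃ k < i, v = (A ^ k) *ᵥ r }

/-- The first standard basis vector `e₁ ∈ ℂ^(m+1)`. -/
def e1 (m : ℕ) : Fin (m+1) → ℂ := fun i => if i = 0 then 1 else 0

/-- `y` is the unique minimizer of `‖t - M y'‖₂` over all `y'`. -/
def IsUniqueVecMin {a b : Type*} [Fintype a] [Fintype b]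
    (M : Matrix a b ℂ) (t : a → ℂ) (y : b → ℂ) : Prop :=
  (∀ y', vnSq (t - M *ᵥ y) ≤ vnSq (t - M *ᵥ y')) ∧
  ∀ y', (∀ y'', vnSq (t - M *ᵥ y') ≤ vnSq (t - M *ᵥ y'')) → y' = y

/-- A breakdown-free (single-vector) Arnoldi decomposition of length `j = q + 1`
for the linear system `A x = b` with initial guess `x₀`. -/
structure ArnoldiSV (n q : ℕ) : Type where
  A : Matrix (Fin n) (Fin n) ℂ
  b : Fin n → ℂ
  x0 : Fin n → ℂ
  V : Matrix (Fin n) (Fin (q+2)) ℂ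
  Hbar : Matrix (Fin (q+2)) (Fin (q+1)) ℂ
  hn : q + 2 ≤ n
  r0_ne : b - A *ᵥ x0 ≠ 0
  orth : Vᴴ * V = 1
  v1 : ∀ r, V r 0 = (b - A *ᵥ x0) r / (vnorm (b - A *ᵥ x0) : ℂ)
  span : ∀ i : ℕ, i ≤ q + 2 →
    krylov A (b - A *ᵥ x0) i =
      Submodule.span ℂ { v | ∃ c : Fin (q+2), (c : ℕ) < i ∧ v = fun r => V r c }
  arnoldi : A * V.submatrix id Fin.castSucc = V * Hbar
  hess : ∀ (r : Fin (q+2)) (c : Fin (q+1)), (c : ℕ) + 1 < (r : ℕ) → Hbar r c = 0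
  subdiag : ∀ k : Fin (q+1), 0 < (Hbar k.succ k).re ∧ (Hbar k.succ k).im = 0

namespace ArnoldiSV

variable {n q : ℕ}

/-- The initial residual `r₀ = b - A x₀`. -/
def r0 (D : ArnoldiSV n q) : Fin n → ℂ := D.b - D.A *ᵥ D.x0

/-- `β = ‖r₀‖₂`. -/
def beta (D : ArnoldiSV n q) : ℝ := vnorm D.r0

/-- `H̄_{j-1}`, the leading `j × (j-1)` submatrix of `H̄_j`. -/
def Hprev (D : ArnoldiSV n q) : Matrix (Fin (q+1)) (Fin q) ℂ :=
  D.Hbar.submatrix Fin.castSucc Fin.castSucc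

/-- `H_j`, the leading `j × j` submatrix of `H̄_j`. -/
def Hsq (D : ArnoldiSV n q) : Matrix (Fin (q+1)) (Fin (q+1)) ℂ :=
  D.Hbar.submatrix Fin.castSucc id

/-- `V_j = [v₁ … v_j]`. -/
def Vfull (D : ArnoldiSV n q) : Matrix (Fin n) (Fin (q+1)) ℂ :=
  D.V.submatrix id Fin.castSucc

/-- `V_{j-1} = [v₁ … v_{j-1}]`. -/
def Vprev (D : ArnoldiSV n q) : Matrix (Fin n) (Fin q) ℂ :=
  D.V.submatrix id fun i : Fin q => (i.castSucc.castSucc : Fin (q+2))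

end ArnoldiSV

lemma vnSq_nonneg {m : Type*} [Fintype m] (v : m → ℂ) : 0 ≤ vnSq v :=
  Finset.sum_nonneg fun i _ => Complex.normSq_nonneg _

lemma eq_zero_of_vnSq_eq_zero {m : Type*} [Fintype m] {v : m → ℂ} (h : vnSq v = 0) : v = 0 := by
  funext i
  have := (Finset.sum_eq_zero_iff_of_nonneg
    (fun i _ => Complex.normSq_nonneg (v i))).mp h i (Finset.mem_univ i)
  exact Complex.normSq_eq_zero.mp this

lemma vnSq_pyth {m : Type*} [Fintype m] (u v : m → ℂ) (h : star v ⬝ᵥ u = 0) :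
    vnSq (u + v) = vnSq u + vnSq v := by
  have h2 : (∑ i, (u i * (starRingEnd ℂ) (v i)).re) = 0 := by
    have := congrArg Complex.re h
    simpa [dotProduct, Complex.re_sum, mul_comm] using this
  simp only [vnSq, Pi.add_apply, Complex.normSq_add, Finset.sum_add_distrib]
  rw [← Finset.mul_sum, h2]
  ring

lemma inner_mulVec_eq_zero {a b : Type*} [Fintype a] [Fintype b]
    (M : Matrix a b ℂ) (z : b → ℂ) (u : a → ℂ) (h : Mᴴ *ᵥ u = 0) :
    star (M *ᵥ z) ⬝ᵥ u = 0 := by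
  rw [star_mulVec, ← dotProduct_mulVec, h, dotProduct_zero]

lemma mp_key {m : Type*} [Fintype m] (M P : Matrix m m ℂ) (hP : IsMoorePenrose M P) (w : m → ℂ) :
    (∀ y, vnSq (w - M *ᵥ (P *ᵥ w)) ≤ vnSq (w - M *ᵥ y)) ∧
    (∀ y, vnSq (w - M *ᵥ y) = vnSq (w - M *ᵥ (P *ᵥ w)) → vnSq (P *ᵥ w) ≤ vnSq y) := by
  obtain ⟨h1, h2, h3, h4⟩ := hP
  have hMMP : Mᴴ * (M * P) = Mᴴ := by
    calc Mᴴ * (M * P) = Mᴴ * (M * P)ᴴ := by rw [h3]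
      _ = (M * P * M)ᴴ := (conjTranspose_mul (M * P) M).symm
      _ = Mᴴ := by rw [h1]
  have hres : Mᴴ *ᵥ (w - M *ᵥ (P *ᵥ w)) = 0 := by
    rw [mulVec_sub, mulVec_mulVec, mulVec_mulVec, Matrix.mul_assoc, hMMP, sub_self]
  have key : ∀ y, vnSq (w - M *ᵥ y)
      = vnSq (w - M *ᵥ (P *ᵥ w)) + vnSq (M *ᵥ (P *ᵥ w - y)) := by
    intro y
    have he : w - M *ᵥ y = (w - M *ᵥ (P *ᵥ w)) + M *ᵥ (P *ᵥ w - y) := by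
      rw [mulVec_sub]; abel
    rw [he, vnSq_pyth _ _ (inner_mulVec_eq_zero M _ _ hres)]
  constructor
  · intro y
    rw [key y]
    exact le_add_of_nonneg_right (vnSq_nonneg _)
  · intro y hy
    have hz : vnSq (M *ᵥ (P *ᵥ w - y)) = 0 := by
      have := key y
      linarith [hy ▸ this]
    have hMy : M *ᵥ (P *ᵥ w) = M *ᵥ y := by
      have := eq_zero_of_vnSq_eq_zero hz
      rw [mulVec_sub] at this
      exact sub_eq_zero.mp this
    have hPw : P *ᵥ w = (P * M) *ᵥ y := by
      calc P *ᵥ w = (P * M * P) *ᵥ w := by rw [h2]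
        _ = P *ᵥ (M *ᵥ (P *ᵥ w)) := by rw [mulVec_mulVec, mulVec_mulVec, Matrix.mul_assoc]
        _ = P *ᵥ (M *ᵥ y) := by rw [hMy]
        _ = (P * M) *ᵥ y := by rw [mulVec_mulVec]
    have hPMidem : (P * M) * (P * M) = P * M := by
      calc (P * M) * (P * M) = (P * M * P) * M := by rw [Matrix.mul_assoc (P*M) P M, Matrix.mul_assoc]
        _ = P * M := by rw [h2]
    have hortho : (P * M)ᴴ *ᵥ (y - (P * M) *ᵥ y) = 0 := by
      rw [h4, mulVec_sub, mulVec_mulVec, hPMidem, sub_self]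
    have hdec : y = (y - (P * M) *ᵥ y) + (P * M) *ᵥ y := by abel
    have := vnSq_pyth (y - (P * M) *ᵥ y) ((P * M) *ᵥ y)
      (inner_mulVec_eq_zero (P * M) _ _ hortho)
    rw [hPw]
    calc vnSq ((P * M) *ᵥ y) ≤ vnSq (y - (P * M) *ᵥ y) + vnSq ((P * M) *ᵥ y) :=
        le_add_of_nonneg_left (vnSq_nonneg _)
      _ = vnSq y := by rw [← this, ← hdec]

/-- (Progressive formulation of the GMRES and generalized FOM
corrections; `j = q + 2 ≥ 2`.)  The GMRES progressive correction `y_{s_j}^(G)`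
(defined by `x_j^(G) = x_{j-1}^(G) + V_j y_{s_j}^(G)`) is the unique minimizer of
`‖[β e₁ - H̄_{j-1} y_{j-1}^(G); 0] - H̄_j y‖₂`, and the generalized FOM progressive
correction `ỹ_{s_j}^(F) = H_j† (β e₁ - H̄_{j-1} y_{j-1}^(G))` is a minimizer of
`‖β e₁ - H̄_{j-1} y_{j-1}^(G) - H_j y‖₂` of smallest 2-norm among all minimizers. -/
theorem stmt2 {n q : ℕ} (D : ArnoldiSV n (q+1))
    (yj : Fin (q+2) → ℂ) (hyj : IsUniqueVecMin D.Hbar (D.beta • e1 (q+2)) yj)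
    (yprev : Fin (q+1) → ℂ) (hyprev : IsUniqueVecMin D.Hprev (D.beta • e1 (q+1)) yprev)
    (P : Matrix (Fin (q+2)) (Fin (q+2)) ℂ) (hP : IsMoorePenrose D.Hsq P)
    (ysG : Fin (q+2) → ℂ)
    (hysG : D.x0 + D.Vfull *ᵥ yj = (D.x0 + D.Vprev *ᵥ yprev) + D.Vfull *ᵥ ysG) :
    -- (i) `y_{s_j}^(G)` is the unique minimizer of the padded least-squares problem
    (∀ T : Fin (q+3) → ℂ,
      T = (fun (r : Fin (q+3)) => if h : (r : ℕ) < q + 2 then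
             (D.beta • e1 (q+1) - D.Hprev *ᵥ yprev) ⟨r, h⟩ else 0) →
      (∀ y : Fin (q+2) → ℂ, vnSq (T - D.Hbar *ᵥ ysG) ≤ vnSq (T - D.Hbar *ᵥ y)) ∧
      (∀ y : Fin (q+2) → ℂ,
        (∀ y', vnSq (T - D.Hbar *ᵥ y) ≤ vnSq (T - D.Hbar *ᵥ y')) → y = ysG)) ∧
    -- (ii) `ỹ_{s_j}^(F)` is a minimizer of the FOM residual-update problem, of
    -- minimum norm among all minimizers
    (∀ w : Fin (q+2) → ℂ, w = D.beta • e1 (q+1) - D.Hprev *ᵥ yprev →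
      (∀ y : Fin (q+2) → ℂ,
        vnSq (w - D.Hsq *ᵥ (P *ᵥ w)) ≤ vnSq (w - D.Hsq *ᵥ y)) ∧
      (∀ y : Fin (q+2) → ℂ,
        vnSq (w - D.Hsq *ᵥ y) = vnSq (w - D.Hsq *ᵥ (P *ᵥ w)) →
        vnSq (P *ᵥ w) ≤ vnSq y)) := by
  classical
  set pad : Fin (q+2) → ℂ := Fin.snoc yprev 0 with hpad
  have hVpad : D.Vfull *ᵥ pad = D.Vprev *ᵥ yprev := by
    funext r
    simp only [mulVec, dotProduct, ArnoldiSV.Vfull, ArnoldiSV.Vprev, submatrix_apply, id]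
    rw [Fin.sum_univ_castSucc]
    simp [hpad, Fin.snoc_castSucc, Fin.snoc_last]
  have hVV : D.Vfullᴴ * D.Vfull = 1 := by
    ext i k
    have h0 : (D.Vᴴ * D.V) i.castSucc k.castSucc
        = (1 : Matrix (Fin (q+3)) (Fin (q+3)) ℂ) i.castSucc k.castSucc := by rw [D.orth]
    simp only [Matrix.mul_apply, conjTranspose_apply, Matrix.one_apply,
      ArnoldiSV.Vfull, submatrix_apply, id] at h0 ⊢
    rw [h0]
    simp [Fin.castSucc_inj]
  have hinj : ∀ u v : Fin (q+2) → ℂ, D.Vfull *ᵥ u = D.Vfull *ᵥ v → u = v := by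
    intro u v h
    have h2 := congrArg (fun x => D.Vfullᴴ *ᵥ x) h
    simpa [mulVec_mulVec, hVV, one_mulVec] using h2
  have hsum : pad + ysG = yj := by
    apply hinj
    rw [mulVec_add, hVpad]
    have h3 : D.Vfull *ᵥ yj = D.Vprev *ᵥ yprev + D.Vfull *ᵥ ysG :=
      add_left_cancel (hysG.trans (add_assoc _ _ _))
    rw [h3]
  constructor
  · intro T hTdef
    have hT : T = D.beta • e1 (q+2) - D.Hbar *ᵥ pad := by
      rw [hTdef]; funext r
      by_cases hr : (r : ℕ) < q + 2
      · simp only [dif_pos hr]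
        set s : Fin (q+2) := ⟨(r : ℕ), hr⟩ with hs
        have hrs : r = s.castSucc := Fin.ext rfl
        rw [hrs]
        have e1eq : e1 (q+1) s = e1 (q+2) s.castSucc := by
          simp only [e1, Fin.castSucc_eq_zero_iff]
        have meq : (D.Hbar *ᵥ pad) s.castSucc = (D.Hprev *ᵥ yprev) s := by
          simp only [mulVec, dotProduct, ArnoldiSV.Hprev, submatrix_apply]
          rw [Fin.sum_univ_castSucc]
          simp [hpad, Fin.snoc_castSucc, Fin.snoc_last]
        simp [Pi.sub_apply, Pi.smul_apply, e1eq, meq]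
      · have hrv : (r : ℕ) = q + 2 := by
          have := r.isLt; omega
        simp only [dif_neg hr]
        have hm : (D.Hbar *ᵥ pad) r = 0 := by
          simp only [mulVec, dotProduct]
          rw [Fin.sum_univ_castSucc]
          have hz : ∀ c : Fin (q+1), D.Hbar r c.castSucc = 0 := by
            intro c
            apply D.hess r c.castSucc
            have := c.isLt
            simp only [Fin.coe_castSucc, hrv]
            omega
          simp [hpad, hz, Fin.snoc_castSucc, Fin.snoc_last]
        have he : e1 (q+2) r = 0 := by
          simp only [e1, Fin.ext_iff, Fin.val_zero, hrv]
          norm_num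
        simp [hm, he]
    have htr : ∀ y, T - D.Hbar *ᵥ y = D.beta • e1 (q+2) - D.Hbar *ᵥ (pad + y) := by
      intro y; rw [hT, mulVec_add]; abel
    constructor
    · intro y
      rw [htr, htr, hsum]
      exact hyj.1 (pad + y)
    · intro y hy
      have hmin : ∀ y'', vnSq (D.beta • e1 (q+2) - D.Hbar *ᵥ (pad + y))
          ≤ vnSq (D.beta • e1 (q+2) - D.Hbar *ᵥ y'') := by
        intro y''
        have h5 := hy (y'' - pad)
        rw [htr, htr] at h5
        have h6 : pad + (y'' - pad) = y'' := by abel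
        rwa [h6] at h5
      have h7 := hyj.2 (pad + y) hmin
      have h8 : pad + y = pad + ysG := h7.trans hsum.symm
      exact add_left_cancel h8
  · intro w _
    exact mp_key D.Hsq P hP w



end
end

section
/- Assume the block setup and QR setup, and let N̂_j† denote the Moore–Penrose pseudoinverse of N̂_j. Set Y_{S_j}^{(G)} := [−R_{j−1}^{−1} Z_j N_j^{−1} C_j; N_j^{−1} C_j] ∈ ℂ^{jL×L} and Ỹ_{S_j}^{(F)} := [−R_{j−1}^{−1} Z_j N̂_j† Ĉ_j; N̂_j† Ĉ_j] ∈ ℂ^{jL×L}. Then: (i) X_j^{(G)} = X_{j−1}^{(G)} + W_j Y_{S_j}^{(G)}; (ii) Y_{S_j}^{(G)} is the unique minimizer over Y ∈ ℂ^{jL×L} of ‖[E_L^{[jL]} S₀ − H̄_{j−1} Y_{j−1}^{(G)}; 0_{L×L}] − H̄_j Y‖_F; (iii) Ỹ_{S_j}^{(F)} is a minimizer over Y ∈ ℂ^{jL×L} of ‖E_L^{[jL]} S₀ − H̄_{j−1} Y_{j−1}^{(G)} − H_j Y‖_F. -/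
open Matrix

noncomputable section

set_option maxHeartbeats 1000000

/-- Squared Frobenius norm of a complex matrix. -/
def frobSq {a b : Type*} [Fintype a] [Fintype b] (M : Matrix a b ℂ) : ℝ :=
  ∑ r, ∑ c, Complex.normSq (M r c)

/-- The block Krylov subspace `𝕂_i(A, F)`: the span of all columns of
`F, A F, …, A^(i-1) F`. -/
def blockKrylov {n L : ℕ} (A : Matrix (Fin n) (Fin n) ℂ)
    (F : Matrix (Fin n) (Fin L) ℂ) (i : ℕ) : Submodule ℂ (Fin n → ℂ) :=
  Submodule.span ℂ { v | ∃ k < i, ∃ c : Fin L, v = fun r => (A ^ k * F) r c }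

/-- `E_L^{[mL]}` : the first `L` columns of the `mL × mL` identity matrix
(block row indexing). -/
def EL (m L : ℕ) : Matrix (Fin m × Fin L) (Fin L) ℂ :=
  Matrix.of fun r c => if (r.1 : ℕ) = 0 ∧ r.2 = c then 1 else 0

/-- An `L × L` matrix is upper triangular. -/
def utL {L : ℕ} (M : Matrix (Fin L) (Fin L) ℂ) : Prop :=
  ∀ a b : Fin L, (b : ℕ) < (a : ℕ) → M a b = 0

/-- A block-indexed `mL × mL` matrix is upper triangular. -/
def utBig {m L : ℕ} (M : Matrix (Fin m × Fin L) (Fin m × Fin L) ℂ) : Prop :=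
  ∀ r c : Fin m × Fin L, (c.1 : ℕ) * L + (c.2 : ℕ) < (r.1 : ℕ) * L + (r.2 : ℕ) → M r c = 0

/-- Stack a block-tall matrix on top of an extra block row. -/
def vcat {m L : ℕ} {col : Type*} (T : Matrix (Fin m × Fin L) col ℂ)
    (Bo : Matrix (Fin L) col ℂ) : Matrix (Fin (m+1) × Fin L) col ℂ :=
  Matrix.of fun r cc => if h : (r.1 : ℕ) < m then T (⟨r.1, h⟩, r.2) cc else Bo r.2 cc

/-- The block matrix `[[R, Z], [0, N]]`. -/
def twoBlock {m L : ℕ} (R : Matrix (Fin m × Fin L) (Fin m × Fin L) ℂ)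
    (Z : Matrix (Fin m × Fin L) (Fin L) ℂ) (N : Matrix (Fin L) (Fin L) ℂ) :
    Matrix (Fin (m+1) × Fin L) (Fin (m+1) × Fin L) ℂ :=
  Matrix.of fun r c =>
    if hr : (r.1 : ℕ) < m then
      if hc : (c.1 : ℕ) < m then R (⟨r.1, hr⟩, r.2) (⟨c.1, hc⟩, c.2)
      else Z (⟨r.1, hr⟩, r.2) c.2
    else
      if (c.1 : ℕ) < m then 0 else N r.2 c.2

/-- The block matrix `[[R, Z], [0, Hmid], [0, Hbot]]`. -/
def threeBlock {m L : ℕ} (R : Matrix (Fin m × Fin L) (Fin m × Fin L) ℂ)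
    (Z : Matrix (Fin m × Fin L) (Fin L) ℂ) (Hmid Hbot : Matrix (Fin L) (Fin L) ℂ) :
    Matrix (Fin (m+2) × Fin L) (Fin (m+1) × Fin L) ℂ :=
  Matrix.of fun r c =>
    if hr : (r.1 : ℕ) < m then
      if hc : (c.1 : ℕ) < m then R (⟨r.1, hr⟩, r.2) (⟨c.1, hc⟩, c.2)
      else Z (⟨r.1, hr⟩, r.2) c.2
    else
      if (c.1 : ℕ) < m then 0
      else if (r.1 : ℕ) = m then Hmid r.2 c.2 else Hbot r.2 c.2

/-- `diag(Q, I_L)` : extend a block-indexed square matrix by an identity block. -/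
def extendOne {m L : ℕ} (Q : Matrix (Fin m × Fin L) (Fin m × Fin L) ℂ) :
    Matrix (Fin (m+1) × Fin L) (Fin (m+1) × Fin L) ℂ :=
  Matrix.of fun r c =>
    if hr : (r.1 : ℕ) < m then
      if hc : (c.1 : ℕ) < m then Q (⟨r.1, hr⟩, r.2) (⟨c.1, hc⟩, c.2) else 0
    else
      if (c.1 : ℕ) < m then 0 else if r.2 = c.2 then 1 else 0

/-- `diag(I_{mL}, Q)` : an identity block, then `Q` in the bottom right corner. -/
def extendBot {m L : ℕ} (Q : Matrix (Fin L) (Fin L) ℂ) :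
    Matrix (Fin (m+1) × Fin L) (Fin (m+1) × Fin L) ℂ :=
  Matrix.of fun r c =>
    if (r.1 : ℕ) < m ∨ (c.1 : ℕ) < m then (if r = c then 1 else 0)
    else Q r.2 c.2

/-- The `(m+2)L × (m+2)L` matrix which is the identity outside of its trailing
principal `2L × 2L` block, which is `[[Q11, Q12], [Q21, Q22]]`. -/
def trailingTwo {m L : ℕ} (Q11 Q12 Q21 Q22 : Matrix (Fin L) (Fin L) ℂ) :
    Matrix (Fin (m+2) × Fin L) (Fin (m+2) × Fin L) ℂ :=
  Matrix.of fun r c =>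
    if (r.1 : ℕ) < m ∨ (c.1 : ℕ) < m then (if r = c then 1 else 0)
    else if (r.1 : ℕ) = m then
      (if (c.1 : ℕ) = m then Q11 r.2 c.2 else Q12 r.2 c.2)
    else
      (if (c.1 : ℕ) = m then Q21 r.2 c.2 else Q22 r.2 c.2)

/-- The block matrix `[R ; 0]` (one extra zero block row below `R`). -/
def stackZero {m L : ℕ} (R : Matrix (Fin m × Fin L) (Fin m × Fin L) ℂ) :
    Matrix (Fin (m+1) × Fin L) (Fin m × Fin L) ℂ :=
  Matrix.of fun r c => if h : (r.1 : ℕ) < m then R (⟨r.1, h⟩, r.2) c else 0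

/-- A breakdown-free block Arnoldi decomposition of length `j = p + 1` for the block
linear system `A X = B` with initial guess `X₀` (block size `L`). -/
structure BlockArnoldi (n L p : ℕ) : Type where
  A : Matrix (Fin n) (Fin n) ℂ
  B : Matrix (Fin n) (Fin L) ℂ
  X0 : Matrix (Fin n) (Fin L) ℂ
  W : Matrix (Fin n) (Fin (p+2) × Fin L) ℂ
  S0 : Matrix (Fin L) (Fin L) ℂ
  Hbar : Matrix (Fin (p+2) × Fin L) (Fin (p+1) × Fin L) ℂ
  hL : 1 ≤ L
  hn : (p+2) * L ≤ n
  F0_rank : (B - A * X0).rank = L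
  orth : Wᴴ * W = 1
  S0_ut : utL S0
  S0_inv : IsUnit S0
  F0_eq : B - A * X0 = (W.submatrix id fun c : Fin L => ((0 : Fin (p+2)), c)) * S0
  span : ∀ i : ℕ, i ≤ p + 2 →
    blockKrylov A (B - A * X0) i =
      Submodule.span ℂ { v | ∃ c : Fin (p+2) × Fin L, (c.1 : ℕ) < i ∧ v = fun r => W r c }
  arnoldi : A * W.submatrix id (Prod.map Fin.castSucc id) = W * Hbar
  hess : ∀ r c, (c.1 : ℕ) + 1 < (r.1 : ℕ) → Hbar r c = 0
  sub_ut : ∀ (k : Fin (p+1)) (a b : Fin L), (b : ℕ) < (a : ℕ) → Hbar (k.succ, a) (k, b) = 0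
  sub_inv : ∀ k : Fin (p+1), IsUnit (Matrix.of fun a b : Fin L => Hbar (k.succ, a) (k, b))

namespace BlockArnoldi

variable {n L p : ℕ}

/-- `H̄_{j-1}`, the leading `jL × (j-1)L` submatrix of `H̄_j`. -/
def Hprev (D : BlockArnoldi n L p) : Matrix (Fin (p+1) × Fin L) (Fin p × Fin L) ℂ :=
  D.Hbar.submatrix (Prod.map Fin.castSucc id) (Prod.map Fin.castSucc id)

/-- `H_j`, the leading `jL × jL` submatrix of `H̄_j`. -/
def Hsq (D : BlockArnoldi n L p) : Matrix (Fin (p+1) × Fin L) (Fin (p+1) × Fin L) ℂ :=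
  D.Hbar.submatrix (Prod.map Fin.castSucc id) id

/-- `W_j = [V₁ … V_j]`. -/
def Wfull (D : BlockArnoldi n L p) : Matrix (Fin n) (Fin (p+1) × Fin L) ℂ :=
  D.W.submatrix id (Prod.map Fin.castSucc id)

/-- `W_{j-1} = [V₁ … V_{j-1}]`. -/
def Wprev (D : BlockArnoldi n L p) : Matrix (Fin n) (Fin p × Fin L) ℂ :=
  D.W.submatrix id (Prod.map (fun i : Fin p => (i.castSucc.castSucc : Fin (p+2))) id)

/-- `V_j`, the `j`-th block Arnoldi vector. -/
def Vj (D : BlockArnoldi n L p) : Matrix (Fin n) (Fin L) ℂ :=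
  D.W.submatrix id fun c : Fin L => (((Fin.last p).castSucc : Fin (p+2)), c)

end BlockArnoldi

/-- `Y` is the unique minimizer of `‖Hb • Y' - T‖_F` over all `Y'`. -/
def IsUniqueFrobMin {a b c : Type*} [Fintype a] [Fintype b] [Fintype c]
    (Hb : Matrix a b ℂ) (T : Matrix a c ℂ) (Y : Matrix b c ℂ) : Prop :=
  (∀ Y', frobSq (Hb * Y - T) ≤ frobSq (Hb * Y' - T)) ∧
  ∀ Y', (∀ Y'', frobSq (Hb * Y' - T) ≤ frobSq (Hb * Y'' - T)) → Y' = Y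

/-- `Y_j^{(G)}` is the solution of the `j`-th block GMRES least-squares subproblem. -/
def IsBlockGMRESj {n L p : ℕ} (D : BlockArnoldi n L p)
    (Y : Matrix (Fin (p+1) × Fin L) (Fin L) ℂ) : Prop :=
  IsUniqueFrobMin D.Hbar (EL (p+2) L * D.S0) Y

/-- `Y_{j-1}^{(G)}` is the solution of the `(j-1)`-st block GMRES least-squares
subproblem. -/
def IsBlockGMRESprev {n L p : ℕ} (D : BlockArnoldi n L p)
    (Y : Matrix (Fin p × Fin L) (Fin L) ℂ) : Prop :=
  IsUniqueFrobMin D.Hprev (EL (p+1) L * D.S0) Y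

/-- The QR setup at step `j = p+1` : a QR factorization `Q̄_{j-1} H̄_{j-1} = [R_{j-1}; 0]`
from the previous step, the induced splitting
`diag(Q̄_{j-1}, I_L)·H̄_j = [[R,Z],[0,Ĥ_{jj}],[0,H_{j+1,j}]]`, the unitary `Q_j`
(identity outside its trailing principal `2L×2L` block) completing the
QR factorization of `H̄_j`, and the unitary `Q̂_j^{(b)}` triangularizing `Ĥ_{jj}`. -/
structure QRSetup (L p : ℕ) (Hbar : Matrix (Fin (p+2) × Fin L) (Fin (p+1) × Fin L) ℂ)
    (S0 : Matrix (Fin L) (Fin L) ℂ) : Type where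
  Qbar : Matrix (Fin (p+1) × Fin L) (Fin (p+1) × Fin L) ℂ
  R : Matrix (Fin p × Fin L) (Fin p × Fin L) ℂ
  Z : Matrix (Fin p × Fin L) (Fin L) ℂ
  Hhat : Matrix (Fin L) (Fin L) ℂ
  Hsub : Matrix (Fin L) (Fin L) ℂ
  Q11 : Matrix (Fin L) (Fin L) ℂ
  Q12 : Matrix (Fin L) (Fin L) ℂ
  Q21 : Matrix (Fin L) (Fin L) ℂ
  Q22 : Matrix (Fin L) (Fin L) ℂ
  N : Matrix (Fin L) (Fin L) ℂ
  Qhatb : Matrix (Fin L) (Fin L) ℂ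
  Nhat : Matrix (Fin L) (Fin L) ℂ
  Qbar_unit : Qbarᴴ * Qbar = 1
  Qbar_base : p = 0 → Qbar = 1
  R_ut : utBig R
  R_inv : IsUnit R
  qr_prev : Qbar * Hbar.submatrix (Prod.map Fin.castSucc id) (Prod.map Fin.castSucc id)
      = stackZero R
  qr_split : extendOne Qbar * Hbar = threeBlock R Z Hhat Hsub
  Qj_unit : (trailingTwo (m := p) Q11 Q12 Q21 Q22)ᴴ * trailingTwo (m := p) Q11 Q12 Q21 Q22 = 1
  qr_full : trailingTwo (m := p) Q11 Q12 Q21 Q22 * (extendOne Qbar * Hbar)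
      = threeBlock R Z N 0
  N_ut : utL N
  N_inv : IsUnit N
  Qhatb_unit : Qhatbᴴ * Qhatb = 1
  Nhat_def : Nhat = Qhatb * Hhat
  Nhat_ut : utL Nhat

namespace QRSetup

variable {L p : ℕ} {Hbar : Matrix (Fin (p+2) × Fin L) (Fin (p+1) × Fin L) ℂ}
  {S0 : Matrix (Fin L) (Fin L) ℂ}

/-- `C̃_j` : the last `L` rows of `Q̄_{j-1} E_L^{[jL]} S₀`. -/
def Ct (S : QRSetup L p Hbar S0) : Matrix (Fin L) (Fin L) ℂ :=
  Matrix.of fun a b => (S.Qbar * (EL (p+1) L * S0)) ((Fin.last p), a) b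

/-- `C_j := Q_j^{(11)} C̃_j`. -/
def C (S : QRSetup L p Hbar S0) : Matrix (Fin L) (Fin L) ℂ := S.Q11 * S.Ct

/-- `Ĉ_j := Q̂_j^{(b)} C̃_j`. -/
def Chat (S : QRSetup L p Hbar S0) : Matrix (Fin L) (Fin L) ℂ := S.Qhatb * S.Ct

end QRSetup

section FrobAux
variable {a b c : Type*} [Fintype a] [Fintype b] [Fintype c]

lemma frobSq_nonneg (M : Matrix a b ℂ) : 0 ≤ frobSq M :=
  Finset.sum_nonneg fun _ _ => Finset.sum_nonneg fun _ _ => Complex.normSq_nonneg _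

lemma frobSq_zero : frobSq (0 : Matrix a b ℂ) = 0 := by simp [frobSq]

lemma frobSq_neg (M : Matrix a b ℂ) : frobSq (-M) = frobSq M := by
  simp [frobSq]

lemma frobSq_sub_comm (A B : Matrix a b ℂ) : frobSq (A - B) = frobSq (B - A) := by
  rw [← frobSq_neg (A - B), neg_sub]

lemma frobSq_eq_trace (M : Matrix a b ℂ) : frobSq M = (Matrix.trace (Mᴴ * M)).re := by
  rw [Matrix.trace]
  simp only [Matrix.diag_apply, Matrix.mul_apply, Matrix.conjTranspose_apply]
  rw [Complex.re_sum]
  rw [frobSq, Finset.sum_comm]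
  refine Finset.sum_congr rfl fun cc _ => ?_
  rw [Complex.re_sum]
  refine Finset.sum_congr rfl fun r _ => ?_
  simp [Complex.normSq_apply, Complex.mul_re, Complex.star_def, Complex.conj_re,
    Complex.conj_im]

lemma frobSq_unitary [DecidableEq b] {U : Matrix a b ℂ} (hU : Uᴴ * U = 1) (M : Matrix b c ℂ) :
    frobSq (U * M) = frobSq M := by
  rw [frobSq_eq_trace, frobSq_eq_trace, Matrix.conjTranspose_mul,
    Matrix.mul_assoc Mᴴ Uᴴ (U * M), ← Matrix.mul_assoc Uᴴ U M, hU, Matrix.one_mul]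

lemma frobSq_add_cross (A B : Matrix a b ℂ) :
    frobSq (A + B) = frobSq A + frobSq B + 2 * (Matrix.trace (Aᴴ * B)).re := by
  rw [frobSq_eq_trace, frobSq_eq_trace, frobSq_eq_trace, Matrix.conjTranspose_add,
    Matrix.add_mul, Matrix.mul_add, Matrix.mul_add, Matrix.trace_add, Matrix.trace_add,
    Matrix.trace_add]
  have h : Matrix.trace (Bᴴ * A) = star (Matrix.trace (Aᴴ * B)) := by
    rw [← Matrix.trace_conjTranspose, Matrix.conjTranspose_mul,
      Matrix.conjTranspose_conjTranspose]
  rw [h]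
  simp only [Complex.add_re]
  have : (star (Matrix.trace (Aᴴ * B))).re = (Matrix.trace (Aᴴ * B)).re := by
    simp [Complex.conj_re]
  rw [this]; ring

lemma mp_min (M : Matrix a b ℂ) (P : Matrix b a ℂ) (h : IsMoorePenrose M P)
    (C : Matrix a c ℂ) (X : Matrix b c ℂ) :
    frobSq (M * (P * C) - C) ≤ frobSq (M * X - C) := by
  obtain ⟨h1, _, h3, _⟩ := h
  have hsym : (M * P)ᴴ = M * P := h3
  have hPM : (M * P) * M = M := h1
  have hPP : (M * P) * (M * P) = M * P := by
    rw [← Matrix.mul_assoc, h1]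
  have key : M * X - C = (M * X - (M * P) * C) + ((M * P) * C - C) := by abel
  have hA : (M * P) * (M * X - (M * P) * C) = M * X - (M * P) * C := by
    rw [Matrix.mul_sub, ← Matrix.mul_assoc, hPM, ← Matrix.mul_assoc, hPP]
  have hB : (M * P) * ((M * P) * C - C) = 0 := by
    rw [Matrix.mul_sub, ← Matrix.mul_assoc, hPP, sub_self]
  have hcross : Matrix.trace ((M * X - (M * P) * C)ᴴ * ((M * P) * C - C)) = 0 := by
    rw [← hA, Matrix.conjTranspose_mul, hsym, Matrix.mul_assoc, hB, Matrix.mul_zero,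
      Matrix.trace_zero]
  have hsplit : frobSq (M * X - C) = frobSq (M * X - (M * P) * C) + frobSq ((M * P) * C - C) := by
    rw [key, frobSq_add_cross, hcross]; simp
  rw [hsplit]
  have h0 := frobSq_nonneg (M * X - (M * P) * C)
  have he : M * (P * C) = (M * P) * C := by rw [Matrix.mul_assoc]
  rw [he]; linarith

end FrobAux

section BlockAux
variable {m L : ℕ} {col d : Type*}

lemma sum_split {M : Type*} [AddCommMonoid M] (f : Fin (m+1) × Fin L → M) :
    ∑ x, f x = (∑ x : Fin m × Fin L, f (x.1.castSucc, x.2)) + ∑ a : Fin L, f (Fin.last m, a) := by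
  rw [Fintype.sum_prod_type, Fintype.sum_prod_type, Fin.sum_univ_castSucc]

lemma vcat_castSucc (T : Matrix (Fin m × Fin L) col ℂ) (Bo : Matrix (Fin L) col ℂ)
    (i : Fin m) (aL : Fin L) (cc : col) :
    vcat T Bo (i.castSucc, aL) cc = T (i, aL) cc := by
  simp only [vcat, Matrix.of_apply, Fin.coe_castSucc, dif_pos i.isLt]

lemma vcat_last (T : Matrix (Fin m × Fin L) col ℂ) (Bo : Matrix (Fin L) col ℂ)
    (aL : Fin L) (cc : col) :
    vcat T Bo (Fin.last m, aL) cc = Bo aL cc := by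
  simp [vcat, Fin.val_last]

lemma fin_cases (r : Fin (m+1)) : (∃ i : Fin m, r = i.castSucc) ∨ r = Fin.last m := by
  rcases lt_or_ge (r : ℕ) m with h | h
  · exact Or.inl ⟨⟨r, h⟩, by ext; simp⟩
  · exact Or.inr (by ext; simp [Fin.val_last]; omega)

lemma vcat_top (T : Matrix (Fin m × Fin L) col ℂ) (Bo : Matrix (Fin L) col ℂ) :
    (vcat T Bo).submatrix (Prod.map Fin.castSucc id) id = T := by
  ext ⟨i, aL⟩ cc
  simp [Matrix.submatrix_apply, Prod.map, vcat_castSucc]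

lemma vcat_bot (T : Matrix (Fin m × Fin L) col ℂ) (Bo : Matrix (Fin L) col ℂ) :
    (vcat T Bo).submatrix (fun a : Fin L => (Fin.last m, a)) id = Bo := by
  ext aL cc
  simp [Matrix.submatrix_apply, vcat_last]

lemma vcat_eta (M : Matrix (Fin (m+1) × Fin L) col ℂ) :
    vcat (M.submatrix (Prod.map Fin.castSucc id) id)
      (M.submatrix (fun a : Fin L => (Fin.last m, a)) id) = M := by
  ext ⟨r, aL⟩ cc
  rcases fin_cases r with ⟨i, rfl⟩ | rfl
  · rw [vcat_castSucc]; simp [Prod.map]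
  · rw [vcat_last]; simp

lemma vcat_add (T T' : Matrix (Fin m × Fin L) col ℂ) (B B' : Matrix (Fin L) col ℂ) :
    vcat T B + vcat T' B' = vcat (T + T') (B + B') := by
  ext ⟨r, aL⟩ cc
  rcases fin_cases r with ⟨i, rfl⟩ | rfl <;>
    simp [Matrix.add_apply, vcat_castSucc, vcat_last]

lemma vcat_sub (T T' : Matrix (Fin m × Fin L) col ℂ) (B B' : Matrix (Fin L) col ℂ) :
    vcat T B - vcat T' B' = vcat (T - T') (B - B') := by
  ext ⟨r, aL⟩ cc
  rcases fin_cases r with ⟨i, rfl⟩ | rfl <;>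
    simp [Matrix.sub_apply, vcat_castSucc, vcat_last]

lemma frobSq_vcat [Fintype col] (T : Matrix (Fin m × Fin L) col ℂ)
    (Bo : Matrix (Fin L) col ℂ) :
    frobSq (vcat T Bo) = frobSq T + frobSq Bo := by
  rw [frobSq, sum_split (f := fun r => ∑ cc, Complex.normSq (vcat T Bo r cc))]
  congr 1
  · refine Finset.sum_congr rfl fun x _ => Finset.sum_congr rfl fun cc _ => ?_
    rw [vcat_castSucc]
  · refine Finset.sum_congr rfl fun aL _ => Finset.sum_congr rfl fun cc _ => ?_
    rw [vcat_last]

lemma vcat_mul [Fintype col] (T : Matrix (Fin m × Fin L) col ℂ)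
    (Bo : Matrix (Fin L) col ℂ) (M : Matrix col d ℂ) :
    vcat T Bo * M = vcat (T * M) (Bo * M) := by
  ext ⟨r, aL⟩ cc
  rcases fin_cases r with ⟨i, rfl⟩ | rfl
  · rw [vcat_castSucc]
    simp only [Matrix.mul_apply]
    exact Finset.sum_congr rfl fun k _ => by rw [vcat_castSucc]
  · rw [vcat_last]
    simp only [Matrix.mul_apply]
    exact Finset.sum_congr rfl fun k _ => by rw [vcat_last]

lemma mul_vcat {e : Type*} [Fintype e] (M : Matrix e (Fin (m+1) × Fin L) ℂ)
    (x : Matrix (Fin m × Fin L) d ℂ) (y : Matrix (Fin L) d ℂ) :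
    M * vcat x y = M.submatrix id (Prod.map Fin.castSucc id) * x
      + (M.submatrix id fun a : Fin L => (Fin.last m, a)) * y := by
  ext r cc
  simp only [Matrix.mul_apply, Matrix.add_apply, Matrix.submatrix_apply, id_eq]
  rw [sum_split (f := fun k => M r k * vcat x y k cc)]
  congr 1
  · exact Finset.sum_congr rfl fun k _ => by rw [vcat_castSucc]; rfl
  · exact Finset.sum_congr rfl fun k _ => by rw [vcat_last]

lemma stackZero_mul (R : Matrix (Fin m × Fin L) (Fin m × Fin L) ℂ)
    (x : Matrix (Fin m × Fin L) d ℂ) :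
    stackZero R * x = vcat (R * x) 0 := by
  ext ⟨r, aL⟩ cc
  rcases fin_cases r with ⟨i, rfl⟩ | rfl
  · rw [vcat_castSucc]
    simp only [Matrix.mul_apply, stackZero, Matrix.of_apply, Fin.coe_castSucc,
      dif_pos i.isLt]
  · rw [vcat_last]
    simp [Matrix.mul_apply, stackZero]

lemma twoBlock_col_cast (R : Matrix (Fin m × Fin L) (Fin m × Fin L) ℂ)
    (Z : Matrix (Fin m × Fin L) (Fin L) ℂ) (N : Matrix (Fin L) (Fin L) ℂ) :
    (twoBlock R Z N).submatrix id (Prod.map Fin.castSucc id) = stackZero R := by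
  ext ⟨r, aL⟩ ⟨c, b⟩
  by_cases h : (r : ℕ) < m <;>
    simp [twoBlock, stackZero, h, c.isLt, Prod.map, Fin.eta]

lemma twoBlock_col_last (R : Matrix (Fin m × Fin L) (Fin m × Fin L) ℂ)
    (Z : Matrix (Fin m × Fin L) (Fin L) ℂ) (N : Matrix (Fin L) (Fin L) ℂ) :
    (twoBlock R Z N).submatrix id (fun a : Fin L => (Fin.last m, a)) = vcat Z N := by
  ext ⟨r, aL⟩ b
  have hlast : ¬ ((Fin.last m : Fin (m+1)) : ℕ) < m := by simp [Fin.val_last]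
  rcases fin_cases r with ⟨i, rfl⟩ | rfl
  · rw [Matrix.submatrix_apply, vcat_castSucc]
    simp [twoBlock, Fin.val_last, i.isLt]
  · rw [Matrix.submatrix_apply, vcat_last]
    simp [twoBlock, Fin.val_last]

lemma twoBlock_mul_vcat (R : Matrix (Fin m × Fin L) (Fin m × Fin L) ℂ)
    (Z : Matrix (Fin m × Fin L) (Fin L) ℂ) (N : Matrix (Fin L) (Fin L) ℂ)
    (x : Matrix (Fin m × Fin L) d ℂ) (y : Matrix (Fin L) d ℂ) :
    twoBlock R Z N * vcat x y = vcat (R * x + Z * y) (N * y) := by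
  rw [mul_vcat, twoBlock_col_cast, twoBlock_col_last, stackZero_mul, vcat_mul,
    vcat_add, zero_add]


lemma threeBlock_eq (R : Matrix (Fin m × Fin L) (Fin m × Fin L) ℂ)
    (Z : Matrix (Fin m × Fin L) (Fin L) ℂ) (Hm Hb : Matrix (Fin L) (Fin L) ℂ) :
    threeBlock R Z Hm Hb = vcat (m := m+1) (twoBlock R Z Hm)
      (Matrix.of fun a (c : Fin (m+1) × Fin L) => if (c.1 : ℕ) < m then 0 else Hb a c.2) := by
  ext ⟨r, aL⟩ ⟨c, b⟩
  rcases fin_cases r with ⟨i, rfl⟩ | rfl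
  · rw [vcat_castSucc]
    by_cases h : (i : ℕ) < m
    · by_cases hc : (c : ℕ) < m <;>
        simp [threeBlock, twoBlock, h, hc, Fin.eta]
    · have h2 : (i : ℕ) = m := by omega
      by_cases hc : (c : ℕ) < m <;>
        simp [threeBlock, twoBlock, h, hc, h2]
  · rw [vcat_last]
    have h : ¬ ((Fin.last (m+1) : Fin (m+2)) : ℕ) < m := by simp [Fin.val_last]
    have h2 : ¬ ((Fin.last (m+1) : Fin (m+2)) : ℕ) = m := by simp [Fin.val_last]
    by_cases hc : (c : ℕ) < m <;> simp [threeBlock, h, h2, hc]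

lemma lastRow_mul (Hb : Matrix (Fin L) (Fin L) ℂ) (Y : Matrix (Fin (m+1) × Fin L) d ℂ) :
    (Matrix.of fun a (c : Fin (m+1) × Fin L) => if (c.1 : ℕ) < m then 0 else Hb a c.2) * Y
      = Hb * Y.submatrix (fun a : Fin L => (Fin.last m, a)) id := by
  ext a cc
  rw [Matrix.mul_apply, Matrix.mul_apply,
    sum_split (f := fun k => (Matrix.of fun a (c : Fin (m+1) × Fin L) =>
      if (c.1 : ℕ) < m then 0 else Hb a c.2) a k * Y k cc)]
  simp [Fin.val_last]

lemma threeBlock_mul_zero (R : Matrix (Fin m × Fin L) (Fin m × Fin L) ℂ)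
    (Z : Matrix (Fin m × Fin L) (Fin L) ℂ) (Hm : Matrix (Fin L) (Fin L) ℂ)
    (Y : Matrix (Fin (m+1) × Fin L) d ℂ) :
    threeBlock R Z Hm 0 * Y = vcat (m := m+1) (twoBlock R Z Hm * Y) 0 := by
  rw [threeBlock_eq, vcat_mul, lastRow_mul]
  simp

lemma threeBlock_top (R : Matrix (Fin m × Fin L) (Fin m × Fin L) ℂ)
    (Z : Matrix (Fin m × Fin L) (Fin L) ℂ) (Hm Hb : Matrix (Fin L) (Fin L) ℂ) :
    (threeBlock R Z Hm Hb).submatrix (Prod.map (Fin.castSucc (n := m+1)) id) id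
      = twoBlock R Z Hm := by
  rw [threeBlock_eq, vcat_top]

lemma extendOne_mul (Q : Matrix (Fin m × Fin L) (Fin m × Fin L) ℂ)
    (M : Matrix (Fin (m+1) × Fin L) d ℂ) :
    extendOne Q * M = vcat (Q * M.submatrix (Prod.map Fin.castSucc id) id)
      (M.submatrix (fun a : Fin L => (Fin.last m, a)) id) := by
  ext ⟨r, aL⟩ cc
  rcases fin_cases r with ⟨i, rfl⟩ | rfl
  · rw [vcat_castSucc, Matrix.mul_apply, Matrix.mul_apply,
      sum_split (f := fun k => extendOne Q (i.castSucc, aL) k * M k cc)]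
    have h2 : ∀ a : Fin L, extendOne Q (i.castSucc, aL) (Fin.last m, a) = 0 := by
      intro a; simp [extendOne, i.isLt, Fin.val_last]
    simp only [h2, zero_mul, Finset.sum_const_zero, add_zero]
    refine Finset.sum_congr rfl fun k _ => ?_
    simp [extendOne, i.isLt, k.1.isLt, Fin.eta, Prod.map]
  · rw [vcat_last, Matrix.mul_apply,
      sum_split (f := fun k => extendOne Q (Fin.last m, aL) k * M k cc)]
    have h1 : ∀ k : Fin m × Fin L, extendOne Q (Fin.last m, aL) (k.1.castSucc, k.2) = 0 := by
      intro k; simp [extendOne, Fin.val_last, k.1.isLt]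
    simp only [h1, zero_mul, Finset.sum_const_zero, zero_add]
    have h3 : ∀ a : Fin L, extendOne Q (Fin.last m, aL) (Fin.last m, a)
        = if aL = a then 1 else 0 := by
      intro a; simp [extendOne, Fin.val_last]
    simp only [h3, ite_mul, one_mul, zero_mul]
    rw [Finset.sum_ite_eq Finset.univ aL (fun a => M (Fin.last m, a) cc)]
    simp

lemma extendOne_unitary {Q : Matrix (Fin m × Fin L) (Fin m × Fin L) ℂ}
    (hQ : Qᴴ * Q = 1) : (extendOne Q)ᴴ * extendOne Q = 1 := by
  ext ⟨r, aL⟩ ⟨c, b⟩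
  rw [Matrix.mul_apply,
    sum_split (f := fun k => (extendOne Q)ᴴ (r, aL) k * extendOne Q k (c, b))]
  simp only [Matrix.conjTranspose_apply]
  rcases fin_cases r with ⟨i, rfl⟩ | rfl <;> rcases fin_cases c with ⟨ic, rfl⟩ | rfl
  · have := congrFun (congrFun hQ (i, aL)) (ic, b)
    rw [Matrix.mul_apply] at this
    have h2 : ∀ a : Fin L, extendOne Q (Fin.last m, a) (i.castSucc, aL) = 0 := by
      intro a; simp [extendOne, Fin.val_last, i.isLt]
    simp only [h2, star_zero, zero_mul, Finset.sum_const_zero, add_zero]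
    have h3 : ∀ k : Fin m × Fin L, extendOne Q (k.1.castSucc, k.2) (i.castSucc, aL)
        = Q k (i, aL) := by
      intro k; simp [extendOne, k.1.isLt, i.isLt, Fin.eta]
    have h4 : ∀ k : Fin m × Fin L, extendOne Q (k.1.castSucc, k.2) (ic.castSucc, b)
        = Q k (ic, b) := by
      intro k; simp [extendOne, k.1.isLt, ic.isLt, Fin.eta]
    simp only [h3, h4]
    have hsum : (∑ x : Fin m × Fin L, star (Q x (i, aL)) * Q x (ic, b))
        = (1 : Matrix (Fin m × Fin L) (Fin m × Fin L) ℂ) (i, aL) (ic, b) := by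
      rw [← this]
      exact Finset.sum_congr rfl fun k _ => by rw [Matrix.conjTranspose_apply]
    rw [hsum]
    simp [Matrix.one_apply, Prod.mk.injEq, Fin.castSucc_inj]
  · have h2 : ∀ a : Fin L, extendOne Q (Fin.last m, a) (i.castSucc, aL) = 0 := by
      intro a; simp [extendOne, Fin.val_last, i.isLt]
    have h4 : ∀ k : Fin m × Fin L, extendOne Q (k.1.castSucc, k.2) (Fin.last m, b) = 0 := by
      intro k; simp [extendOne, k.1.isLt, Fin.val_last]
    simp only [h2, h4, star_zero, zero_mul, mul_zero, Finset.sum_const_zero, add_zero]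
    rw [Matrix.one_apply_ne (by simp [Prod.ext_iff, Fin.ext_iff, Fin.val_last]; omega)]
  · have h2 : ∀ a : Fin L, extendOne Q (Fin.last m, a) (ic.castSucc, b) = 0 := by
      intro a; simp [extendOne, Fin.val_last, ic.isLt]
    have h4 : ∀ k : Fin m × Fin L, extendOne Q (k.1.castSucc, k.2) (Fin.last m, aL) = 0 := by
      intro k; simp [extendOne, k.1.isLt, Fin.val_last]
    simp only [h2, h4, star_zero, zero_mul, mul_zero, Finset.sum_const_zero, add_zero]
    rw [Matrix.one_apply_ne (by simp [Prod.ext_iff, Fin.ext_iff, Fin.val_last]; omega)]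
  · have h4 : ∀ k : Fin m × Fin L, extendOne Q (k.1.castSucc, k.2) (Fin.last m, aL) = 0 := by
      intro k; simp [extendOne, k.1.isLt, Fin.val_last]
    have h5 : ∀ k : Fin m × Fin L, extendOne Q (k.1.castSucc, k.2) (Fin.last m, b) = 0 := by
      intro k; simp [extendOne, k.1.isLt, Fin.val_last]
    simp only [h4, h5, star_zero, zero_mul, mul_zero, Finset.sum_const_zero, zero_add]
    have h3 : ∀ a aL : Fin L, extendOne Q (Fin.last m, a) (Fin.last m, aL)
        = if a = aL then 1 else 0 := by
      intro a aL; simp [extendOne, Fin.val_last]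
    simp only [h3]
    rw [show (∑ a : Fin L, star (if a = aL then (1:ℂ) else 0) * if a = b then 1 else 0)
        = ∑ a : Fin L, (if aL = a then (if a = b then (1:ℂ) else 0) else 0) from
      Finset.sum_congr rfl fun a _ => by
        by_cases h : a = aL
        · subst h; simp
        · simp [h, Ne.symm h]]
    rw [Finset.sum_ite_eq Finset.univ aL (fun a => if a = b then (1:ℂ) else 0)]
    simp [Matrix.one_apply, Prod.ext_iff]


lemma trailingTwo_mul (Q11 Q12 Q21 Q22 : Matrix (Fin L) (Fin L) ℂ)
    (X : Matrix (Fin m × Fin L) d ℂ) (c1 c2 : Matrix (Fin L) d ℂ) :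
    trailingTwo (m := m) Q11 Q12 Q21 Q22 * vcat (m := m+1) (vcat X c1) c2
      = vcat (m := m+1) (vcat X (Q11 * c1 + Q12 * c2)) (Q21 * c1 + Q22 * c2) := by
  ext ⟨r, aL⟩ cc
  rw [Matrix.mul_apply]
  rcases fin_cases r with ⟨r', rfl⟩ | rfl
  · rcases fin_cases r' with ⟨i, rfl⟩ | rfl
    · have hrow : ∀ k, trailingTwo (m := m) Q11 Q12 Q21 Q22 (i.castSucc.castSucc, aL) k
          = if ((i.castSucc.castSucc : Fin (m+2)), aL) = k then 1 else 0 := by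
        intro k
        have hi : ((i.castSucc.castSucc : Fin (m+2)) : ℕ) < m := by simp [i.isLt]
        simp [trailingTwo, hi]
      simp only [hrow, ite_mul, one_mul, zero_mul]
      rw [Finset.sum_ite_eq Finset.univ _ (fun k => vcat (vcat X c1) c2 k cc)]
      simp only [vcat_castSucc, vcat_last, Finset.mem_univ, if_true]
    · rw [sum_split (m := m+1) (f := fun k => trailingTwo (m := m) Q11 Q12 Q21 Q22
        ((Fin.last m).castSucc, aL) k * vcat (m := m+1) (vcat X c1) c2 k cc)]
      rw [sum_split (m := m) (f := fun k : Fin (m+1) × Fin L =>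
        trailingTwo (m := m) Q11 Q12 Q21 Q22 ((Fin.last m).castSucc, aL)
          (k.1.castSucc, k.2)
        * vcat (m := m+1) (vcat X c1) c2 (k.1.castSucc, k.2) cc)]
      have hA : ∀ y : Fin m × Fin L, trailingTwo (m := m) Q11 Q12 Q21 Q22
          ((Fin.last m).castSucc, aL) ((y.1.castSucc : Fin (m+1)).castSucc, y.2) = 0 := by
        intro y
        have := y.1.isLt
        simp only [trailingTwo, Matrix.of_apply, Fin.coe_castSucc, Fin.val_last]
        rw [if_pos (Or.inr (by simpa using this))]
        rw [if_neg (by simp [Prod.ext_iff, Fin.ext_iff, Fin.val_last]; omega)]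
      have hB : ∀ dd : Fin L, trailingTwo (m := m) Q11 Q12 Q21 Q22
          ((Fin.last m).castSucc, aL) ((Fin.last m).castSucc, dd) = Q11 aL dd := by
        intro dd
        simp [trailingTwo, Fin.val_last]
      have hC : ∀ dd : Fin L, trailingTwo (m := m) Q11 Q12 Q21 Q22
          ((Fin.last m).castSucc, aL) (Fin.last (m+1), dd) = Q12 aL dd := by
        intro dd
        simp [trailingTwo, Fin.val_last]
      simp only [hA, hB, hC, zero_mul, Finset.sum_const_zero, zero_add]
      simp only [vcat_castSucc, vcat_last, Matrix.add_apply, Matrix.mul_apply]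
  · rw [sum_split (m := m+1) (f := fun k => trailingTwo (m := m) Q11 Q12 Q21 Q22
        (Fin.last (m+1), aL) k * vcat (m := m+1) (vcat X c1) c2 k cc)]
    rw [sum_split (m := m) (f := fun k : Fin (m+1) × Fin L =>
        trailingTwo (m := m) Q11 Q12 Q21 Q22 (Fin.last (m+1), aL)
          (k.1.castSucc, k.2)
        * vcat (m := m+1) (vcat X c1) c2 (k.1.castSucc, k.2) cc)]
    have hA : ∀ y : Fin m × Fin L, trailingTwo (m := m) Q11 Q12 Q21 Q22
        (Fin.last (m+1), aL) ((y.1.castSucc : Fin (m+1)).castSucc, y.2) = 0 := by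
      intro y
      have := y.1.isLt
      simp only [trailingTwo, Matrix.of_apply, Fin.coe_castSucc, Fin.val_last]
      rw [if_pos (Or.inr (by simpa using this))]
      rw [if_neg (by simp [Prod.ext_iff, Fin.ext_iff, Fin.val_last]; omega)]
    have hB : ∀ dd : Fin L, trailingTwo (m := m) Q11 Q12 Q21 Q22
        (Fin.last (m+1), aL) ((Fin.last m).castSucc, dd) = Q21 aL dd := by
      intro dd
      simp [trailingTwo, Fin.val_last]
    have hC : ∀ dd : Fin L, trailingTwo (m := m) Q11 Q12 Q21 Q22
        (Fin.last (m+1), aL) (Fin.last (m+1), dd) = Q22 aL dd := by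
      intro dd
      simp [trailingTwo, Fin.val_last]
    simp only [hA, hB, hC, zero_mul, Finset.sum_const_zero, zero_add]
    simp only [vcat_castSucc, vcat_last, Matrix.add_apply, Matrix.mul_apply]

lemma EL_mul_apply (S : Matrix (Fin L) (Fin L) ℂ) (r : Fin m) (a c : Fin L) :
    (EL m L * S) (r, a) c = if (r : ℕ) = 0 then S a c else 0 := by
  rw [Matrix.mul_apply]
  by_cases h : (r : ℕ) = 0
  · simp [EL, h, ite_mul, Finset.sum_ite_eq]
  · simp [EL, h]

lemma EL_succ (hm : 0 < m) (S : Matrix (Fin L) (Fin L) ℂ) :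
    EL (m+1) L * S = vcat (EL m L * S) 0 := by
  ext ⟨r, a⟩ c
  rcases fin_cases r with ⟨i, rfl⟩ | rfl
  · rw [vcat_castSucc]
    rw [show ((EL (m+1) L * S) (i.castSucc, a) c) = if ((i.castSucc : Fin (m+1)) : ℕ) = 0 then S a c else 0 from EL_mul_apply S i.castSucc a c]
    rw [EL_mul_apply]
    simp
  · rw [vcat_last,
      show ((EL (m+1) L * S) (Fin.last m, a) c) = if ((Fin.last m : Fin (m+1)) : ℕ) = 0 then S a c else 0 from EL_mul_apply S (Fin.last m) a c]
    rw [if_neg (by simp [Fin.val_last]; omega)]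
    rfl

end BlockAux


/-- The progressive update formulas for block GMRES and generalized
block FOM: (i) `X_j^(G) = X_{j-1}^(G) + W_j Y_{S_j}^(G)` with
`Y_{S_j}^(G) = [-R_{j-1}⁻¹ Z_j N_j⁻¹ C_j ; N_j⁻¹ C_j]`; (ii) `Y_{S_j}^(G)` is the
unique minimizer of `‖[E_L S₀ - H̄_{j-1} Y_{j-1}^(G); 0] - H̄_j Y‖_F`; (iii)
`Ỹ_{S_j}^(F) = [-R_{j-1}⁻¹ Z_j N̂_j† Ĉ_j ; N̂_j† Ĉ_j]` is a minimizer of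
`‖E_L S₀ - H̄_{j-1} Y_{j-1}^(G) - H_j Y‖_F`. -/
theorem stmt6 {n L p : ℕ} (D : BlockArnoldi n L p) (S : QRSetup L p D.Hbar D.S0)
    (Yj : Matrix (Fin (p+1) × Fin L) (Fin L) ℂ) (hYj : IsBlockGMRESj D Yj)
    (Yprev : Matrix (Fin p × Fin L) (Fin L) ℂ) (hYprev : IsBlockGMRESprev D Yprev)
    (Nhd : Matrix (Fin L) (Fin L) ℂ) (hNhd : IsMoorePenrose S.Nhat Nhd) :
    ∀ YSG : Matrix (Fin (p+1) × Fin L) (Fin L) ℂ,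
      YSG = vcat (-(S.R⁻¹ * S.Z * (S.N⁻¹ * S.C))) (S.N⁻¹ * S.C) →
    ∀ YSF : Matrix (Fin (p+1) × Fin L) (Fin L) ℂ,
      YSF = vcat (-(S.R⁻¹ * S.Z * (Nhd * S.Chat))) (Nhd * S.Chat) →
    ∀ T : Matrix (Fin (p+2) × Fin L) (Fin L) ℂ,
      T = vcat (EL (p+1) L * D.S0 - D.Hprev * Yprev) 0 →
    -- (i)
    (D.X0 + D.Wfull * Yj = (D.X0 + D.Wprev * Yprev) + D.Wfull * YSG) ∧
    -- (ii)
    (∀ Y : Matrix (Fin (p+1) × Fin L) (Fin L) ℂ, frobSq (T - D.Hbar * YSG) ≤ frobSq (T - D.Hbar * Y)) ∧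
    (∀ Y : Matrix (Fin (p+1) × Fin L) (Fin L) ℂ, (∀ Y', frobSq (T - D.Hbar * Y) ≤ frobSq (T - D.Hbar * Y')) → Y = YSG) ∧
    -- (iii)
    (∀ Y : Matrix (Fin (p+1) × Fin L) (Fin L) ℂ, frobSq (EL (p+1) L * D.S0 - D.Hprev * Yprev - D.Hsq * YSF)
        ≤ frobSq (EL (p+1) L * D.S0 - D.Hprev * Yprev - D.Hsq * Y)) := by
  intro YSG hYSG YSF hYSF T hT
  obtain ⟨hjmin, hjuniq⟩ := hYj
  obtain ⟨hpmin, hpuniq⟩ := hYprev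
  have hRR : S.R * S.R⁻¹ = 1 :=
    Matrix.mul_nonsing_inv _ ((Matrix.isUnit_iff_isUnit_det _).mp S.R_inv)
  have hNN : S.N * S.N⁻¹ = 1 :=
    Matrix.mul_nonsing_inv _ ((Matrix.isUnit_iff_isUnit_det _).mp S.N_inv)
  have hCt : (S.Qbar * (EL (p+1) L * D.S0)).submatrix
      (fun a : Fin L => (Fin.last p, a)) id = S.Ct := rfl
  have hvc : S.Qbar * (EL (p+1) L * D.S0)
      = vcat ((S.Qbar * (EL (p+1) L * D.S0)).submatrix (Prod.map Fin.castSucc id) id) S.Ct := by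
    rw [← hCt]
    exact (vcat_eta _).symm
  have hQH : ∀ Y : Matrix (Fin p × Fin L) (Fin L) ℂ,
      S.Qbar * (D.Hprev * Y) = vcat (S.R * Y) 0 := by
    intro Y
    rw [← Matrix.mul_assoc, show S.Qbar * D.Hprev = stackZero S.R from S.qr_prev,
      stackZero_mul]
  have hsplitPrev : ∀ Y : Matrix (Fin p × Fin L) (Fin L) ℂ,
      frobSq (D.Hprev * Y - EL (p+1) L * D.S0)
      = frobSq (S.R * Y - (S.Qbar * (EL (p+1) L * D.S0)).submatrix (Prod.map Fin.castSucc id) id)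
        + frobSq (0 - S.Ct) := by
    intro Y
    rw [← frobSq_unitary S.Qbar_unit (D.Hprev * Y - EL (p+1) L * D.S0), Matrix.mul_sub,
      hQH Y, hvc, vcat_sub, frobSq_vcat, vcat_top]
  have hYprev_eq : S.R * Yprev
      = (S.Qbar * (EL (p+1) L * D.S0)).submatrix (Prod.map Fin.castSucc id) id := by
    have hstar : S.R * (S.R⁻¹ *
        ((S.Qbar * (EL (p+1) L * D.S0)).submatrix (Prod.map Fin.castSucc id) id))
        = (S.Qbar * (EL (p+1) L * D.S0)).submatrix (Prod.map Fin.castSucc id) id := by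
      rw [← Matrix.mul_assoc S.R S.R⁻¹ _, hRR, Matrix.one_mul]
    have hmin' : ∀ Y'' : Matrix (Fin p × Fin L) (Fin L) ℂ, frobSq (D.Hprev * (S.R⁻¹ *
        ((S.Qbar * (EL (p+1) L * D.S0)).submatrix (Prod.map Fin.castSucc id) id))
          - EL (p+1) L * D.S0)
        ≤ frobSq (D.Hprev * Y'' - EL (p+1) L * D.S0) := by
      intro Y''
      rw [hsplitPrev, hsplitPrev, hstar, sub_self, frobSq_zero]
      have := frobSq_nonneg (S.R * Y''
        - (S.Qbar * (EL (p+1) L * D.S0)).submatrix (Prod.map Fin.castSucc id) id)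
      linarith
    have heq := hpuniq _ hmin'
    rw [← heq, hstar]
  have hu : S.Qbar * (EL (p+1) L * D.S0) = vcat (S.R * Yprev) S.Ct := by
    rw [hvc, ← hYprev_eq]
  have hEL2 : EL (p+2) L * D.S0 = vcat (EL (p+1) L * D.S0) 0 := EL_succ p.succ_pos D.S0
  have hQ1E : extendOne S.Qbar * (EL (p+2) L * D.S0)
      = vcat (m := p+1) (vcat (S.R * Yprev) S.Ct) 0 := by
    rw [hEL2, extendOne_mul, vcat_top, vcat_bot, hu]
  have hQE : trailingTwo (m := p) S.Q11 S.Q12 S.Q21 S.Q22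
        * (extendOne S.Qbar * (EL (p+2) L * D.S0))
      = vcat (m := p+1) (vcat (S.R * Yprev) S.C) (S.Q21 * S.Ct) := by
    rw [hQ1E, trailingTwo_mul]
    simp only [Matrix.mul_zero, add_zero]
    rfl
  have hQHb : ∀ Y : Matrix (Fin (p+1) × Fin L) (Fin L) ℂ,
      trailingTwo (m := p) S.Q11 S.Q12 S.Q21 S.Q22 * (extendOne S.Qbar * (D.Hbar * Y))
        = vcat (m := p+1) (twoBlock S.R S.Z S.N * Y) 0 := by
    intro Y
    rw [← Matrix.mul_assoc (extendOne S.Qbar) D.Hbar Y,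
      ← Matrix.mul_assoc (trailingTwo (m := p) S.Q11 S.Q12 S.Q21 S.Q22) _ Y,
      S.qr_full, threeBlock_mul_zero]
  have hOBJ : ∀ Y : Matrix (Fin (p+1) × Fin L) (Fin L) ℂ,
      frobSq (D.Hbar * Y - EL (p+2) L * D.S0)
      = frobSq (twoBlock S.R S.Z S.N * Y - vcat (S.R * Yprev) S.C)
        + frobSq ((0 : Matrix (Fin L) (Fin L) ℂ) - S.Q21 * S.Ct) := by
    intro Y
    rw [← frobSq_unitary (extendOne_unitary S.Qbar_unit) (D.Hbar * Y - EL (p+2) L * D.S0),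
      ← frobSq_unitary S.Qj_unit (extendOne S.Qbar * (D.Hbar * Y - EL (p+2) L * D.S0)),
      Matrix.mul_sub, Matrix.mul_sub, hQHb Y, hQE, vcat_sub, frobSq_vcat]
  have hWE : D.Hbar * vcat Yprev 0 = vcat (m := p+1) (D.Hprev * Yprev) 0 := by
    rw [mul_vcat, Matrix.mul_zero, add_zero]
    have hcols : D.Hbar.submatrix id (Prod.map Fin.castSucc id)
        = vcat (m := p+1) D.Hprev 0 := by
      ext ⟨r, aL⟩ ⟨c, b⟩
      rcases fin_cases r with ⟨i, rfl⟩ | rfl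
      · rw [Matrix.submatrix_apply, vcat_castSucc]
        rfl
      · rw [Matrix.submatrix_apply, vcat_last, Matrix.zero_apply]
        exact D.hess _ _ (by simp [Fin.val_last])
    rw [hcols, vcat_mul, Matrix.zero_mul]
  have hTE : T = EL (p+2) L * D.S0 - D.Hbar * vcat Yprev 0 := by
    rw [hT, hEL2, hWE, vcat_sub, sub_zero]
  have hG : twoBlock S.R S.Z S.N * (vcat Yprev 0 + YSG) = vcat (S.R * Yprev) S.C := by
    rw [hYSG, vcat_add, twoBlock_mul_vcat]
    have e1 : S.R * (Yprev + -(S.R⁻¹ * S.Z * (S.N⁻¹ * S.C))) + S.Z * (0 + S.N⁻¹ * S.C)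
        = S.R * Yprev := by
      rw [zero_add, Matrix.mul_add, Matrix.mul_neg,
        show S.R * (S.R⁻¹ * S.Z * (S.N⁻¹ * S.C)) = S.Z * (S.N⁻¹ * S.C) from by
          rw [← Matrix.mul_assoc S.R (S.R⁻¹ * S.Z) _, ← Matrix.mul_assoc S.R S.R⁻¹ S.Z,
            hRR, Matrix.one_mul]]
      abel
    have e2 : S.N * (0 + S.N⁻¹ * S.C) = S.C := by
      rw [zero_add, ← Matrix.mul_assoc, hNN, Matrix.one_mul]
    rw [e1, e2]
  have hmin2 : ∀ Y : Matrix (Fin (p+1) × Fin L) (Fin L) ℂ,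
      frobSq (D.Hbar * (vcat Yprev 0 + YSG) - EL (p+2) L * D.S0)
        ≤ frobSq (D.Hbar * Y - EL (p+2) L * D.S0) := by
    intro Y
    rw [hOBJ, hOBJ, hG, sub_self, frobSq_zero, zero_add]
    have h1 := frobSq_nonneg (twoBlock S.R S.Z S.N * Y - vcat (S.R * Yprev) S.C)
    linarith
  have hYjE : vcat Yprev 0 + YSG = Yj := hjuniq _ hmin2
  have hTsub : ∀ Y' : Matrix (Fin (p+1) × Fin L) (Fin L) ℂ,
      T - D.Hbar * Y' = -(D.Hbar * (vcat Yprev 0 + Y') - EL (p+2) L * D.S0) := by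
    intro Y'
    rw [hTE, Matrix.mul_add]
    abel
  refine ⟨?_, ?_, ?_, ?_⟩
  · -- (i)
    rw [← hYjE, Matrix.mul_add]
    have hWp : D.Wfull * vcat Yprev 0 = D.Wprev * Yprev := by
      rw [mul_vcat, Matrix.mul_zero, add_zero]
      congr 1
    rw [hWp]
    exact (add_assoc _ _ _).symm
  · -- (ii) minimality
    intro Y
    rw [hTsub YSG, hTsub Y, frobSq_neg, frobSq_neg, hYjE]
    exact hjmin _
  · -- (ii) uniqueness
    intro Y hY
    have hm : ∀ Y'' : Matrix (Fin (p+1) × Fin L) (Fin L) ℂ,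
        frobSq (D.Hbar * (vcat Yprev 0 + Y) - EL (p+2) L * D.S0)
          ≤ frobSq (D.Hbar * Y'' - EL (p+2) L * D.S0) := by
      intro Y''
      have h : frobSq (T - D.Hbar * Y) ≤ frobSq (T - D.Hbar * (Y'' - vcat Yprev 0)) :=
        hY (Y'' - vcat Yprev 0)
      rw [hTsub Y, hTsub (Y'' - vcat Yprev 0), frobSq_neg, frobSq_neg] at h
      rwa [add_sub_cancel] at h
    have h2 := hjuniq _ hm
    exact add_left_cancel (h2.trans hYjE.symm)
  · -- (iii)
    intro Y
    have hI : S.Qbar * D.Hsq = twoBlock S.R S.Z S.Hhat := by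
      have h : (extendOne S.Qbar * D.Hbar).submatrix (Prod.map (Fin.castSucc (n := p+1)) id) id
          = (threeBlock S.R S.Z S.Hhat S.Hsub).submatrix
              (Prod.map (Fin.castSucc (n := p+1)) id) id := by
        rw [S.qr_split]
      rw [extendOne_mul, vcat_top, threeBlock_top] at h
      exact h
    have hobj3 : ∀ Y' : Matrix (Fin (p+1) × Fin L) (Fin L) ℂ,
        frobSq (EL (p+1) L * D.S0 - D.Hprev * Yprev - D.Hsq * Y')
        = frobSq (S.R * (Y'.submatrix (Prod.map Fin.castSucc id) id)
            + S.Z * (Y'.submatrix (fun a : Fin L => (Fin.last p, a)) id))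
          + frobSq (S.Chat
            - S.Nhat * (Y'.submatrix (fun a : Fin L => (Fin.last p, a)) id)) := by
      intro Y'
      have hY' : twoBlock S.R S.Z S.Hhat * Y'
          = vcat (S.R * (Y'.submatrix (Prod.map Fin.castSucc id) id)
              + S.Z * (Y'.submatrix (fun a : Fin L => (Fin.last p, a)) id))
            (S.Hhat * (Y'.submatrix (fun a : Fin L => (Fin.last p, a)) id)) := by
        conv_lhs => rw [← vcat_eta Y']
        rw [twoBlock_mul_vcat]
      rw [← frobSq_unitary S.Qbar_unit
          (EL (p+1) L * D.S0 - D.Hprev * Yprev - D.Hsq * Y'),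
        Matrix.mul_sub, Matrix.mul_sub, hu, hQH Yprev,
        ← Matrix.mul_assoc S.Qbar D.Hsq Y', hI, hY',
        vcat_sub, vcat_sub, frobSq_vcat, sub_self (S.R * Yprev), zero_sub, frobSq_neg,
        sub_zero,
        ← frobSq_unitary S.Qhatb_unit
          (S.Ct - S.Hhat * (Y'.submatrix (fun a : Fin L => (Fin.last p, a)) id)),
        Matrix.mul_sub, ← Matrix.mul_assoc, ← S.Nhat_def]
      rfl
    rw [hobj3 YSF, hobj3 Y, hYSF, vcat_top, vcat_bot]
    have e0 : S.R * (-(S.R⁻¹ * S.Z * (Nhd * S.Chat))) + S.Z * (Nhd * S.Chat) = 0 := by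
      rw [Matrix.mul_neg,
        show S.R * (S.R⁻¹ * S.Z * (Nhd * S.Chat)) = S.Z * (Nhd * S.Chat) from by
          rw [← Matrix.mul_assoc S.R (S.R⁻¹ * S.Z) _, ← Matrix.mul_assoc S.R S.R⁻¹ S.Z,
            hRR, Matrix.one_mul]]
      exact neg_add_cancel _
    rw [e0, frobSq_zero, zero_add]
    have hmp := mp_min S.Nhat Nhd hNhd S.Chat
      (Y.submatrix (fun a : Fin L => (Fin.last p, a)) id)
    have hmp' : frobSq (S.Chat - S.Nhat * (Nhd * S.Chat))
        ≤ frobSq (S.Chat - S.Nhat * (Y.submatrix (fun a : Fin L => (Fin.last p, a)) id)) := by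
      rw [frobSq_sub_comm S.Chat (S.Nhat * (Nhd * S.Chat)), frobSq_sub_comm S.Chat _]
      exact hmp
    have h0 := frobSq_nonneg (S.R * (Y.submatrix (Prod.map Fin.castSucc id) id)
      + S.Z * (Y.submatrix (fun a : Fin L => (Fin.last p, a)) id))
    linarith

end
end
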